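/- Let P(λ) = λ^r + w^{r-1}λ^{r-1} + ⋯ + w^0 have pairwise distinct roots λ_1, …, λ_r, and fix an integer m with 0 ≤ m ≤ r. Define the symmetric r×r matrix g_m with entries g_m^{ij} = (2 / (P'(λ_i)P'(λ_j))) · Σ_{k,l=0}^{r-1} 2 f^{kl}_m w^{k+l+1-m} λ_i^k λ_j^l, where f^{kl}_m = +1 if k,l < m, -1 if k,l ≥ m, 0 otherwise, with conventions w^r = 1 and w^h = 0 for h < 0 or h > r. Then g_m is diagonal: g_m^{ij} = 0 for i ≠ j, and g_m^{ii} = -2 λ_i^m / P'(λ_i). -/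

import Mathlib

open Finset



private lemma tri_sum (n : ℕ) (f : ℕ → ℕ → ℝ) :
    ∑ l ∈ range n, ∑ j ∈ range (n - l), f l j
      = ∑ h ∈ range n, ∑ l ∈ range (h + 1), f l (h - l) := by
  rw [Finset.sum_sigma', Finset.sum_sigma']
  refine Finset.sum_nbij' (fun p => ⟨p.1 + p.2, p.1⟩) (fun p => ⟨p.2, p.1 - p.2⟩)
    ?_ ?_ ?_ ?_ ?_
  · rintro ⟨l, j⟩ hp
    simp only [mem_sigma, mem_range] at hp ⊢
    omega
  · rintro ⟨h, l⟩ hp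
    simp only [mem_sigma, mem_range] at hp ⊢
    omega
  · rintro ⟨l, j⟩ hp
    simp
  · rintro ⟨h, l⟩ hp
    simp only [mem_sigma, mem_range] at hp
    simp only [Sigma.mk.inj_iff]
    constructor
    · omega
    · exact heq_of_eq (by rfl)
  · rintro ⟨l, j⟩ hp
    simp

private lemma key_col (r m l : ℕ) (hm : m ≤ r) (W : ℤ → ℝ)
    (hW0 : ∀ h : ℤ, h < 0 ∨ (r : ℤ) < h → W h = 0) (x : ℝ) :
    ∑ k ∈ range r, (if k < m ∧ l < m then (1:ℝ) else if m ≤ k ∧ m ≤ l then -1 else 0)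
        * W ((k : ℤ) + l + 1 - m) * x ^ k
      = (if l < m then (∑ h ∈ range (r+1), W (h : ℤ) * x ^ h) * x ^ (m - 1 - l) else 0)
        - ∑ j ∈ range (r - l), W ((j : ℤ) + l + 1) * x ^ (m + j) := by
  by_cases hl : l < m
  · simp only [hl, and_true, if_pos]
    -- LHS : terms are `if k < m then W .. * x^k else 0`
    have hL : ∑ k ∈ range r, (if k < m then (1:ℝ) else if m ≤ k ∧ m ≤ l then -1 else 0)
          * W ((k : ℤ) + l + 1 - m) * x ^ k
        = ∑ k ∈ range m, W ((k : ℤ) + l + 1 - m) * x ^ k := by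
      rw [← Finset.sum_range_add_sum_Ico _ hm]
      have h1 : ∀ k ∈ range m, (if k < m then (1:ℝ) else if m ≤ k ∧ m ≤ l then -1 else 0)
          * W ((k : ℤ) + l + 1 - m) * x ^ k = W ((k : ℤ) + l + 1 - m) * x ^ k := by
        intro k hk; rw [mem_range] at hk; simp [hk]
      have h2 : ∀ k ∈ Ico m r, (if k < m then (1:ℝ) else if m ≤ k ∧ m ≤ l then -1 else 0)
          * W ((k : ℤ) + l + 1 - m) * x ^ k = 0 := by
        intro k hk; rw [mem_Ico] at hk
        have : ¬ k < m := by omega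
        have : ¬ m ≤ l := by omega
        simp [*]
      rw [Finset.sum_congr rfl h1, Finset.sum_congr rfl h2, Finset.sum_const_zero, add_zero]
    rw [hL]
    have hL2 : ∑ k ∈ range m, W ((k : ℤ) + l + 1 - m) * x ^ k
        = ∑ i ∈ range (l + 1), W (i : ℤ) * x ^ (m - 1 - l + i) := by
      rw [← Finset.sum_range_add_sum_Ico _ (by omega : m - 1 - l ≤ m)]
      have h1 : ∀ k ∈ range (m - 1 - l), W ((k : ℤ) + l + 1 - m) * x ^ k = 0 := by
        intro k hk; rw [mem_range] at hk
        rw [hW0 _ (Or.inl (by omega)), zero_mul]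
      rw [Finset.sum_congr rfl h1, Finset.sum_const_zero, zero_add,
        Finset.sum_Ico_eq_sum_range]
      refine Finset.sum_congr (by congr 1; omega) fun i hi => ?_
      rw [mem_range] at hi
      have h4 : ((m - 1 - l + i : ℕ) : ℤ) + l + 1 - m = (i : ℤ) := by omega
      rw [h4]
    rw [hL2]
    -- RHS
    have hR : (∑ h ∈ range (r+1), W (h : ℤ) * x ^ h) * x ^ (m - 1 - l)
        = ∑ h ∈ range (r+1), W (h : ℤ) * x ^ (m - 1 - l + h) := by
      rw [Finset.sum_mul]
      refine Finset.sum_congr rfl fun h _ => ?_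
      rw [mul_assoc, ← pow_add]; ring_nf
    rw [hR, ← Finset.sum_range_add_sum_Ico _ (by omega : l + 1 ≤ r + 1),
      Finset.sum_Ico_eq_sum_range]
    have h3 : ∑ i ∈ range (r + 1 - (l + 1)), W ((l + 1 + i : ℕ) : ℤ) * x ^ (m - 1 - l + (l + 1 + i))
        = ∑ j ∈ range (r - l), W ((j : ℤ) + l + 1) * x ^ (m + j) := by
      refine Finset.sum_congr (by congr 1; omega) fun j hj => ?_
      have h4 : ((l + 1 + j : ℕ) : ℤ) = (j : ℤ) + l + 1 := by omega
      have h5 : m - 1 - l + (l + 1 + j) = m + j := by omega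
      rw [h4, h5]
    rw [h3]; ring
  · simp only [hl, and_false, if_false, false_and, zero_sub]
    push_neg at hl
    have hL : ∑ k ∈ range r, (if m ≤ k ∧ m ≤ l then (-1:ℝ) else 0)
          * W ((k : ℤ) + l + 1 - m) * x ^ k
        = -∑ j ∈ range (r - m), W ((j : ℤ) + l + 1) * x ^ (m + j) := by
      rw [← Finset.sum_range_add_sum_Ico _ hm]
      have h1 : ∀ k ∈ range m, (if m ≤ k ∧ m ≤ l then (-1:ℝ) else 0)
          * W ((k : ℤ) + l + 1 - m) * x ^ k = 0 := by
        intro k hk; rw [mem_range] at hk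
        have : ¬ m ≤ k := by omega
        simp [this]
      rw [Finset.sum_congr rfl h1, Finset.sum_const_zero, zero_add,
        Finset.sum_Ico_eq_sum_range, ← Finset.sum_neg_distrib]
      refine Finset.sum_congr rfl fun j hj => ?_
      rw [mem_range] at hj
      have : m ≤ m + j := by omega
      simp only [this, hl, and_self, if_true]
      have : ((m + j : ℕ) : ℤ) + l + 1 - m = (j : ℤ) + l + 1 := by push_cast; omega
      rw [this]; ring
    rw [hL]
    have hsplit : ∑ j ∈ range (r - m), W ((j : ℤ) + l + 1) * x ^ (m + j)
        = ∑ j ∈ range (r - l), W ((j : ℤ) + l + 1) * x ^ (m + j) := by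
      rw [← Finset.sum_range_add_sum_Ico _ (by omega : r - l ≤ r - m)]
      have h1 : ∀ j ∈ Ico (r - l) (r - m), W ((j : ℤ) + l + 1) * x ^ (m + j) = 0 := by
        intro j hj; rw [mem_Ico] at hj
        rw [hW0 _ (Or.inr (by omega)), zero_mul]
      rw [Finset.sum_congr rfl h1, Finset.sum_const_zero, add_zero]
    rw [hsplit]

private lemma S_val (r m : ℕ) (hm : m ≤ r) (W : ℤ → ℝ)
    (hW0 : ∀ h : ℤ, h < 0 ∨ (r : ℤ) < h → W h = 0) (x y : ℝ)
    (hx : ∑ h ∈ range (r + 1), W (h : ℤ) * x ^ h = 0) :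
    ∑ k ∈ range r, ∑ l ∈ range r,
        (if k < m ∧ l < m then (1:ℝ) else if m ≤ k ∧ m ≤ l then -1 else 0)
          * W ((k : ℤ) + l + 1 - m) * x ^ k * y ^ l
      = -∑ h ∈ range r, W ((h : ℤ) + 1) *
          ∑ l ∈ range (h + 1), x ^ (m + h - l) * y ^ l := by
  rw [Finset.sum_comm]
  have step1 : ∀ l ∈ range r, ∑ k ∈ range r,
      (if k < m ∧ l < m then (1:ℝ) else if m ≤ k ∧ m ≤ l then -1 else 0)
        * W ((k : ℤ) + l + 1 - m) * x ^ k * y ^ l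
      = (-∑ j ∈ range (r - l), W ((j : ℤ) + l + 1) * x ^ (m + j)) * y ^ l := by
    intro l _
    rw [← Finset.sum_mul]
    congr 1
    have := key_col r m l hm W hW0 x
    rw [this, hx]
    simp
  rw [Finset.sum_congr rfl step1]
  have step2 : ∑ l ∈ range r, (-∑ j ∈ range (r - l), W ((j : ℤ) + l + 1) * x ^ (m + j)) * y ^ l
      = -∑ l ∈ range r, ∑ j ∈ range (r - l), W ((j : ℤ) + l + 1) * x ^ (m + j) * y ^ l := by
    rw [← Finset.sum_neg_distrib]
    refine Finset.sum_congr rfl fun l _ => ?_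
    rw [neg_mul, Finset.sum_mul]
  rw [step2, tri_sum r (fun l j => W ((j : ℤ) + l + 1) * x ^ (m + j) * y ^ l)]
  congr 1
  refine Finset.sum_congr rfl fun h hh => ?_
  rw [Finset.mul_sum]
  refine Finset.sum_congr rfl fun l hl => ?_
  rw [mem_range] at hh hl
  have h1 : ((h - l : ℕ) : ℤ) + l + 1 = (h : ℤ) + 1 := by omega
  have h2 : m + (h - l) = m + h - l := by omega
  rw [h1, h2, mul_assoc]


open Finset in
/-- In the root coordinates `λ_1,…,λ_r` of `P(λ) = λ^r + w^{r-1}λ^{r-1} + ⋯ + w^0`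
(pairwise distinct roots), the metric `g_m` with entries
`g_m^{ij} = (2/(P'(λ_i)P'(λ_j))) Σ_{k,l=0}^{r-1} f^{kl}_m w^{k+l+1-m} λ_i^k λ_j^l`
(conventions `w^r = 1`, `w^h = 0` for `h < 0` or `h > r`) is diagonal, with
`g_m^{ii} = -2 λ_i^m / P'(λ_i)`. -/
theorem stmt_6 (r m : ℕ) (hm : m ≤ r) (W : ℤ → ℝ) (hWr : W (r : ℤ) = 1)
    (hW0 : ∀ h : ℤ, h < 0 ∨ (r : ℤ) < h → W h = 0)
    (lam : Fin r → ℝ) (hinj : Function.Injective lam) (hne : ∀ i, lam i ≠ 0)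
    (hroot : ∀ i, ∑ h ∈ Finset.range (r + 1), W (h : ℤ) * lam i ^ h = 0)
    (dP : ℝ → ℝ)
    (hdP : dP = fun x => ∑ h ∈ Finset.range (r + 1), (h : ℝ) * W (h : ℤ) * x ^ (h - 1))
    (hdPne : ∀ i, dP (lam i) ≠ 0)
    (F : ℕ → ℕ → ℝ)
    (hF : F = fun k l =>
      if k < m ∧ l < m then 1 else if m ≤ k ∧ m ≤ l then -1 else 0)
    (g : Fin r → Fin r → ℝ)
    (hg : g = fun i j => 2 / (dP (lam i) * dP (lam j)) *
      ∑ k ∈ Finset.range r, ∑ l ∈ Finset.range r,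
        F k l * W ((k : ℤ) + l + 1 - m) * lam i ^ k * lam j ^ l) :
    (∀ i j, i ≠ j → g i j = 0) ∧ (∀ i, g i i = -2 * lam i ^ m / dP (lam i)) := by
  subst hF hg
  constructor
  · intro i j hij
    set x := lam i with hxdef
    set y := lam j with hydef
    have hS := S_val r m hm W hW0 x y (hroot i)
    have hxy : y - x ≠ 0 := sub_ne_zero.mpr fun h => hij (hinj h.symm)
    have hz : (∑ k ∈ range r, ∑ l ∈ range r,
        (if k < m ∧ l < m then (1:ℝ) else if m ≤ k ∧ m ≤ l then -1 else 0)
          * W ((k : ℤ) + l + 1 - m) * x ^ k * y ^ l) * (y - x) = 0 := by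
      rw [hS, neg_mul, Finset.sum_mul]
      have step : ∀ h ∈ range r,
          (W ((h : ℤ) + 1) * ∑ l ∈ range (h + 1), x ^ (m + h - l) * y ^ l) * (y - x)
          = x ^ m * (W ((h : ℤ) + 1) * y ^ (h + 1)) - x ^ m * (W ((h : ℤ) + 1) * x ^ (h + 1)) := by
        intro h _
        have e1 : ∑ l ∈ range (h + 1), x ^ (m + h - l) * y ^ l
            = x ^ m * ∑ l ∈ range (h + 1), y ^ l * x ^ (h + 1 - 1 - l) := by
          rw [Finset.mul_sum]
          refine Finset.sum_congr rfl fun l hl => ?_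
          rw [mem_range] at hl
          have e2 : m + h - l = m + (h + 1 - 1 - l) := by omega
          rw [e2, pow_add]; ring
        rw [e1, mul_assoc, mul_assoc, geom_sum₂_mul]
        ring
      rw [Finset.sum_congr rfl step, Finset.sum_sub_distrib, ← Finset.mul_sum, ← Finset.mul_sum]
      have ey : ∑ h ∈ range r, W ((h : ℤ) + 1) * y ^ (h + 1) = -(W 0 * y ^ 0) := by
        have hr := hroot j
        rw [Finset.sum_range_succ' (fun h => W (h : ℤ) * y ^ h) r] at hr
        push_cast at hr
        linarith
      have ex : ∑ h ∈ range r, W ((h : ℤ) + 1) * x ^ (h + 1) = -(W 0 * x ^ 0) := by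
        have hr := hroot i
        rw [Finset.sum_range_succ' (fun h => W (h : ℤ) * x ^ h) r] at hr
        push_cast at hr
        linarith
      rw [ey, ex]
      simp
    have hS0 : ∑ k ∈ range r, ∑ l ∈ range r,
        (if k < m ∧ l < m then (1:ℝ) else if m ≤ k ∧ m ≤ l then -1 else 0)
          * W ((k : ℤ) + l + 1 - m) * x ^ k * y ^ l = 0 :=
      (mul_eq_zero.mp hz).resolve_right hxy
    simp only [← hxdef, ← hydef, hS0, mul_zero]
  · intro i
    beta_reduce
    set x := lam i with hxdef
    have hS := S_val r m hm W hW0 x x (hroot i)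
    have inner : ∀ h ∈ range r, W ((h : ℤ) + 1) * ∑ l ∈ range (h + 1), x ^ (m + h - l) * x ^ l
        = x ^ m * (((h : ℝ) + 1) * W ((h : ℤ) + 1) * x ^ h) := by
      intro h _
      have e1 : ∀ l ∈ range (h + 1), x ^ (m + h - l) * x ^ l = x ^ m * x ^ h := by
        intro l hl; rw [mem_range] at hl
        rw [← pow_add, ← pow_add]
        congr 1
        omega
      rw [Finset.sum_congr rfl e1, Finset.sum_const, card_range, nsmul_eq_mul]
      push_cast
      ring
    rw [Finset.sum_congr rfl inner, ← Finset.mul_sum] at hS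
    have edP : dP x = ∑ h ∈ range r, ((h : ℝ) + 1) * W ((h : ℤ) + 1) * x ^ h := by
      rw [hdP]
      simp only
      rw [Finset.sum_range_succ' (fun h => (h : ℝ) * W (h : ℤ) * x ^ (h - 1)) r]
      have ecast : ∀ h ∈ range r, ((h + 1 : ℕ) : ℝ) * W (((h + 1 : ℕ)) : ℤ) * x ^ (h + 1 - 1)
          = ((h : ℝ) + 1) * W ((h : ℤ) + 1) * x ^ h := by
        intro h _
        have e1 : ((h + 1 : ℕ) : ℝ) = (h : ℝ) + 1 := by push_cast; ring
        have e2 : (((h + 1 : ℕ)) : ℤ) = (h : ℤ) + 1 := by push_cast; ring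
        have e3 : h + 1 - 1 = h := by omega
        rw [e1, e2, e3]
      rw [Finset.sum_congr rfl ecast]
      simp
    rw [← edP] at hS
    rw [hS]
    have h0 := hdPne i
    field_simp
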